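/- A normalized n-partite amplitude tensor a is separable if and only if for every party k, all 2×2 minors of the k-th flattening M_k vanish; that is, for all row indices I, J and all column indices s, t, one has M_k(I, s) * M_k(J, t) − M_k(I, t) * M_k(J, s) = 0. -/

import Mathlib

open Matrix

noncomputable section

/-- Insert `j` at position `k` into the partial index tuple `I`, producing a full index tuple. -/
def insertAt {n : ℕ} {d : Fin n → ℕ} (k : Fin n)
    (I : ∀ s : {s : Fin n // s ≠ k}, Fin (d s)) (j : Fin (d k)) :
    ∀ t : Fin n, Fin (d t) :=
  fun t => if h : t = k then Fin.cast (congrArg d h).symm j else I ⟨t, h⟩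

/-- The `k`-th flattening of an `n`-partite amplitude tensor `a`. -/
def flatten {n : ℕ} {d : Fin n → ℕ} (a : (∀ t : Fin n, Fin (d t)) → ℂ) (k : Fin n) :
    Matrix (∀ s : {s : Fin n // s ≠ k}, Fin (d s)) (Fin (d k)) ℂ :=
  fun I j => a (insertAt k I j)

/-- An `n`-partite amplitude tensor is separable if it is a product of local vectors. -/
def Separable {n : ℕ} {d : Fin n → ℕ} (a : (∀ t : Fin n, Fin (d t)) → ℂ) : Prop :=
  ∃ f : ∀ k : Fin n, Fin (d k) → ℂ, ∀ i, a i = ∏ k : Fin n, f k (i k)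

/-- An `n`-partite amplitude tensor is normalized if the squared amplitudes sum to 1. -/
def Normalized {n : ℕ} {d : Fin n → ℕ} (a : (∀ t : Fin n, Fin (d t)) → ℂ) : Prop :=
  ∑ i : ∀ t : Fin n, Fin (d t), ‖a i‖ ^ 2 = 1

lemma insertAt_self {n : ℕ} {d : Fin n → ℕ} (k : Fin n)
    (I : ∀ s : {s : Fin n // s ≠ k}, Fin (d s)) (j : Fin (d k)) :
    insertAt k I j k = j := by
  simp only [insertAt, dif_pos rfl]
  exact Fin.ext rfl

lemma insertAt_ne {n : ℕ} {d : Fin n → ℕ} (k : Fin n)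
    (I : ∀ s : {s : Fin n // s ≠ k}, Fin (d s)) (j : Fin (d k)) {t : Fin n} (h : t ≠ k) :
    insertAt k I j t = I ⟨t, h⟩ := by
  simp [insertAt, h]

lemma insertAt_restrict {n : ℕ} {d : Fin n → ℕ} (k : Fin n)
    (i : ∀ t : Fin n, Fin (d t)) (j : Fin (d k)) :
    insertAt k (fun s : {s : Fin n // s ≠ k} => i s.1) j = Function.update i k j := by
  funext t
  by_cases h : t = k
  · subst h
    rw [Function.update_self, insertAt_self]
  · rw [Function.update_of_ne h, insertAt_ne k _ _ h]

/-- Corollary 1: separability iff all 2×2 minors of every flattening `M_k` vanish. -/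
theorem separable_iff_minors {n : ℕ} (hn : 1 ≤ n) (d : Fin n → ℕ) (hd : ∀ k, 1 ≤ d k)
    (a : (∀ t : Fin n, Fin (d t)) → ℂ) (ha : Normalized a) :
    Separable a ↔
      ∀ k : Fin n, ∀ I J : ∀ s : {s : Fin n // s ≠ k}, Fin (d s), ∀ s t : Fin (d k),
        flatten a k I s * flatten a k J t - flatten a k I t * flatten a k J s = 0 := by
  constructor
  · rintro ⟨f, hf⟩ k I J s t
    rw [sub_eq_zero]
    simp only [flatten, hf]
    rw [← Finset.prod_mul_distrib, ← Finset.prod_mul_distrib]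
    refine Finset.prod_congr rfl fun u _ => ?_
    by_cases h : u = k
    · subst h
      simp only [insertAt_self]
      exact mul_comm _ _
    · rw [insertAt_ne k I s h, insertAt_ne k J t h, insertAt_ne k I t h, insertAt_ne k J s h]
  · intro hyp
    -- turn the minor hypothesis into an update form
    have hmin : ∀ (k : Fin n) (i i' : ∀ t : Fin n, Fin (d t)) (s t : Fin (d k)),
        a (Function.update i k s) * a (Function.update i' k t)
          = a (Function.update i k t) * a (Function.update i' k s) := by
      intro k i i' s t
      have := hyp k (fun u : {u : Fin n // u ≠ k} => i u.1)
        (fun u : {u : Fin n // u ≠ k} => i' u.1) s t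
      rw [sub_eq_zero] at this
      simpa only [flatten, insertAt_restrict] using this
    -- find a nonzero entry
    have hex : ∃ i₀ : ∀ t : Fin n, Fin (d t), a i₀ ≠ 0 := by
      by_contra hc
      push_neg at hc
      simp only [Normalized, hc, map_zero] at ha
      simp at ha
    obtain ⟨i₀, h0⟩ := hex
    -- key identity
    have key : ∀ i : ∀ t : Fin n, Fin (d t),
        a i * (a i₀) ^ n = a i₀ * ∏ k : Fin n, a (Function.update i₀ k (i k)) := by
      intro i
      have main : ∀ m : ℕ, m ≤ n →
          a i * (a i₀) ^ m
            = a (fun t : Fin n => if (t : ℕ) < m then i₀ t else i t)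
              * ∏ k ∈ Finset.univ.filter (fun k : Fin n => (k : ℕ) < m),
                  a (Function.update i₀ k (i k)) := by
        intro m
        induction m with
        | zero =>
          intro _
          simp
        | succ m ih =>
          intro hm1
          have hm : m < n := hm1
          have ihm := ih (le_of_lt hm)
          set km : Fin n := ⟨m, hm⟩ with hkm
          have hv : (km : ℕ) = m := rfl
          -- the updated tuple identities
          have hg : (fun t : Fin n => if (t : ℕ) < m + 1 then i₀ t else i t)
              = Function.update (fun t : Fin n => if (t : ℕ) < m then i₀ t else i t) km (i₀ km) := by
            funext t
            by_cases ht : t = km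
            · subst ht
              simp [hv]
            · rw [Function.update_of_ne ht]
              have : (t : ℕ) ≠ m := fun h => ht (Fin.ext h)
              by_cases h1 : (t : ℕ) < m
              · simp [h1, Nat.lt_succ_of_lt h1]
              · have h2 : ¬ (t : ℕ) < m + 1 := by omega
                simp [h1, h2]
          have hfil : Finset.univ.filter (fun k : Fin n => (k : ℕ) < m + 1)
              = insert km (Finset.univ.filter (fun k : Fin n => (k : ℕ) < m)) := by
            ext k
            simp only [Finset.mem_filter, Finset.mem_insert, Finset.mem_univ, true_and]
            constructor
            · intro h
              rcases Nat.lt_succ_iff_lt_or_eq.mp h with h | h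
              · exact Or.inr h
              · exact Or.inl (Fin.ext h)
            · rintro (h | h)
              · subst h; rw [hv]; omega
              · omega
          have hnot : km ∉ Finset.univ.filter (fun k : Fin n => (k : ℕ) < m) := by
            simp [hv]
          -- the minor step
          have step : a (fun t : Fin n => if (t : ℕ) < m then i₀ t else i t) * a i₀
              = a (fun t : Fin n => if (t : ℕ) < m + 1 then i₀ t else i t)
                * a (Function.update i₀ km (i km)) := by
            have h1 := hmin km (fun t : Fin n => if (t : ℕ) < m then i₀ t else i t) i₀
              (i km) (i₀ km)
            have e1 : Function.update (fun t : Fin n => if (t : ℕ) < m then i₀ t else i t) km (i km)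
                = (fun t : Fin n => if (t : ℕ) < m then i₀ t else i t) := by
              have : i km = (fun t : Fin n => if (t : ℕ) < m then i₀ t else i t) km := by
                simp [hv]
              rw [this, Function.update_eq_self]
            have e2 : Function.update i₀ km (i₀ km) = i₀ := Function.update_eq_self km i₀
            rw [e1, e2, ← hg] at h1
            exact h1
          calc a i * a i₀ ^ (m + 1) = (a i * a i₀ ^ m) * a i₀ := by ring
            _ = (a (fun t : Fin n => if (t : ℕ) < m then i₀ t else i t)
                  * ∏ k ∈ Finset.univ.filter (fun k : Fin n => (k : ℕ) < m),
                      a (Function.update i₀ k (i k))) * a i₀ := by rw [ihm]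
            _ = (a (fun t : Fin n => if (t : ℕ) < m then i₀ t else i t) * a i₀)
                  * ∏ k ∈ Finset.univ.filter (fun k : Fin n => (k : ℕ) < m),
                      a (Function.update i₀ k (i k)) := by ring
            _ = a (fun t : Fin n => if (t : ℕ) < m + 1 then i₀ t else i t)
                  * ∏ k ∈ Finset.univ.filter (fun k : Fin n => (k : ℕ) < m + 1),
                      a (Function.update i₀ k (i k)) := by
                rw [step, hfil, Finset.prod_insert hnot]; ring
      have := main n le_rfl
      have hg : (fun t : Fin n => if (t : ℕ) < n then i₀ t else i t) = i₀ := by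
        funext t; simp [t.isLt]
      have hfil : Finset.univ.filter (fun k : Fin n => (k : ℕ) < n) = Finset.univ := by
        ext k; simp [k.isLt]
      rw [hg, hfil] at this
      exact this
    -- build the separating vectors
    set k₀ : Fin n := ⟨0, hn⟩ with hk₀
    refine ⟨fun k j => (a (Function.update i₀ k j) / a i₀) * (if k = k₀ then a i₀ else 1), ?_⟩
    intro i
    have hprod : ∏ k : Fin n, ((a (Function.update i₀ k (i k)) / a i₀)
        * (if k = k₀ then a i₀ else 1))
        = ((∏ k : Fin n, a (Function.update i₀ k (i k))) / (a i₀) ^ n) * a i₀ := by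
      rw [Finset.prod_mul_distrib, Finset.prod_div_distrib, Finset.prod_const,
        Finset.card_univ, Fintype.card_fin, Finset.prod_ite_eq' Finset.univ k₀
          (fun _ => a i₀)]
      simp
    rw [hprod]
    have hpow : (a i₀) ^ n ≠ 0 := pow_ne_zero n h0
    rw [div_mul_eq_mul_div, eq_div_iff hpow]
    linear_combination key i
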